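/- Let D = 𝔽₂(t) be the field of rational functions over the field with two elements (in Mathlib, RatFunc (ZMod 2), with t = RatFunc.X). For any A, B ∈ D there is exactly one pair (f, g) of additive functions f, g : D → D satisfying f(1) = A, f(t) = B, and f(x) + x^2 * g(x⁻¹) = 0 for every nonzero x ∈ D. -/

import Mathlib

open Polynomial RatFunc

noncomputable instance : CharP (RatFunc (ZMod 2)) 2 :=
  charP_of_injective_algebraMap' (ZMod 2) (A := RatFunc (ZMod 2)) 2

lemma stmt9_zmod2_sq (a : ZMod 2) : a ^ 2 = a := by fin_cases a <;> rfl

lemma stmt9_two : (2 : RatFunc (ZMod 2)) = 0 := CharTwo.two_eq_zero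

lemma stmt9_add_eq {a b : RatFunc (ZMod 2)} (h : a + b = 0) : a = b := by
  have := add_eq_zero_iff_eq_neg.mp h
  rwa [CharTwo.neg_eq] at this

lemma stmt9_X_not_sq (w : RatFunc (ZMod 2)) : RatFunc.X ≠ w ^ 2 := by
  intro h
  have hw : w ≠ 0 := by
    rintro rfl
    simp at h
    exact RatFunc.X_ne_zero h
  have h1 : (RatFunc.X : RatFunc (ZMod 2)).intDegree = 1 := RatFunc.intDegree_X
  have h2 : (w ^ 2).intDegree = w.intDegree + w.intDegree := by
    rw [sq]; exact RatFunc.intDegree_mul hw hw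
  rw [h, h2] at h1
  omega

lemma stmt9_poly_decomp (r : Polynomial (ZMod 2)) :
    ∃ u v : Polynomial (ZMod 2), r = u ^ 2 + Polynomial.X * v ^ 2 := by
  generalize hn : r.natDegree = n
  induction n using Nat.strong_induction_on generalizing r with
  | _ n ih =>
  have h2 : (2 : Polynomial (ZMod 2)) = 0 := CharTwo.two_eq_zero
  have hca : (Polynomial.C (r.coeff 0)) ^ 2 = Polynomial.C (r.coeff 0) := by
    rw [← Polynomial.C_pow, stmt9_zmod2_sq]
  by_cases h0 : r.natDegree = 0
  · refine ⟨Polynomial.C (r.coeff 0), 0, ?_⟩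
    conv_lhs => rw [Polynomial.eq_C_of_natDegree_eq_zero h0]
    rw [hca]; ring
  · have hlt : r.divX.natDegree < n := by
      rw [← hn, Polynomial.natDegree_divX_eq_natDegree_tsub_one]; omega
    obtain ⟨u, v, hs⟩ := ih r.divX.natDegree hlt r.divX rfl
    refine ⟨Polynomial.C (r.coeff 0) + Polynomial.X * v, u, ?_⟩
    conv_lhs => rw [← Polynomial.X_mul_divX_add r, hs]
    linear_combination -hca - (Polynomial.C (r.coeff 0) * Polynomial.X * v) * h2

lemma stmt9_decomp (x : RatFunc (ZMod 2)) :
    ∃ p : RatFunc (ZMod 2) × RatFunc (ZMod 2), x = p.1 ^ 2 + RatFunc.X * p.2 ^ 2 := by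
  obtain ⟨u, v, h⟩ := stmt9_poly_decomp (x.num * x.denom)
  set φ := algebraMap (Polynomial (ZMod 2)) (RatFunc (ZMod 2)) with hφ
  have hd : φ x.denom ≠ 0 := RatFunc.algebraMap_ne_zero (RatFunc.denom_ne_zero x)
  refine ⟨(φ u / φ x.denom, φ v / φ x.denom), ?_⟩
  have hnum : φ x.num * φ x.denom = φ u ^ 2 + RatFunc.X * φ v ^ 2 := by
    rw [← RatFunc.algebraMap_X, ← map_pow, ← map_pow, ← map_mul, ← map_mul, ← map_add, h]
  calc x = φ x.num / φ x.denom := (RatFunc.num_div_denom x).symm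
    _ = (φ x.num * φ x.denom) / (φ x.denom ^ 2) := by
        rw [pow_two, mul_div_mul_right _ _ hd]
    _ = (φ u ^ 2 + RatFunc.X * φ v ^ 2) / φ x.denom ^ 2 := by rw [hnum]
    _ = (φ u / φ x.denom) ^ 2 + RatFunc.X * (φ v / φ x.denom) ^ 2 := by
        rw [add_div, div_pow, div_pow, mul_div_assoc]

lemma stmt9_decomp_unique {u v u' v' : RatFunc (ZMod 2)}
    (h : u ^ 2 + RatFunc.X * v ^ 2 = u' ^ 2 + RatFunc.X * v' ^ 2) : u = u' ∧ v = v' := by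
  have h2 : (2 : RatFunc (ZMod 2)) = 0 := stmt9_two
  have hv : v = v' := by
    by_contra hne
    have hvv : v + v' ≠ 0 := fun hz => hne (stmt9_add_eq hz)
    apply stmt9_X_not_sq ((u + u') / (v + v'))
    rw [div_pow, eq_div_iff (pow_ne_zero 2 hvv)]
    linear_combination h + (RatFunc.X*v*v' + RatFunc.X*v'^2 - u*u' - u^2) * h2
  subst hv
  have hu : (u + u') ^ 2 = 0 := by
    rw [CharTwo.add_sq]
    linear_combination h + u'^2 * h2
  have := pow_eq_zero_iff (n := 2) (by norm_num) |>.mp hu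
  exact ⟨stmt9_add_eq this, rfl⟩

noncomputable def stmt9_uv (x : RatFunc (ZMod 2)) : RatFunc (ZMod 2) × RatFunc (ZMod 2) :=
  (stmt9_decomp x).choose

lemma stmt9_uv_spec (x : RatFunc (ZMod 2)) :
    x = (stmt9_uv x).1 ^ 2 + RatFunc.X * (stmt9_uv x).2 ^ 2 :=
  (stmt9_decomp x).choose_spec

lemma stmt9_uv_eq (u v : RatFunc (ZMod 2)) :
    stmt9_uv (u ^ 2 + RatFunc.X * v ^ 2) = (u, v) := by
  have h := (stmt9_uv_spec (u ^ 2 + RatFunc.X * v ^ 2)).symm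
  obtain ⟨h1, h2⟩ := stmt9_decomp_unique h
  exact Prod.ext h1 h2

noncomputable def stmt9_F (A B : RatFunc (ZMod 2)) (x : RatFunc (ZMod 2)) : RatFunc (ZMod 2) :=
  A * (stmt9_uv x).1 ^ 2 + B * (stmt9_uv x).2 ^ 2

lemma stmt9_F_eval (A B u v : RatFunc (ZMod 2)) :
    stmt9_F A B (u ^ 2 + RatFunc.X * v ^ 2) = A * u ^ 2 + B * v ^ 2 := by
  rw [stmt9_F, stmt9_uv_eq]

lemma stmt9_F_add (A B x y : RatFunc (ZMod 2)) :
    stmt9_F A B (x + y) = stmt9_F A B x + stmt9_F A B y := by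
  obtain ⟨⟨u, v⟩, hx⟩ := stmt9_decomp x
  obtain ⟨⟨u', v'⟩, hy⟩ := stmt9_decomp y
  dsimp only at hx hy
  have hxy : x + y = (u + u') ^ 2 + RatFunc.X * (v + v') ^ 2 := by
    rw [hx, hy, CharTwo.add_sq, CharTwo.add_sq]; ring
  rw [hxy, hx, hy, stmt9_F_eval, stmt9_F_eval, stmt9_F_eval, CharTwo.add_sq, CharTwo.add_sq]
  ring

lemma stmt9_F_one (A B : RatFunc (ZMod 2)) : stmt9_F A B 1 = A := by
  have h : (1 : RatFunc (ZMod 2)) = 1 ^ 2 + RatFunc.X * 0 ^ 2 := by ring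
  rw [h, stmt9_F_eval]; ring

lemma stmt9_F_X (A B : RatFunc (ZMod 2)) : stmt9_F A B RatFunc.X = B := by
  have h : (RatFunc.X : RatFunc (ZMod 2)) = 0 ^ 2 + RatFunc.X * 1 ^ 2 := by ring
  rw [h, stmt9_F_eval]; ring

lemma stmt9_F_zero (A B : RatFunc (ZMod 2)) : stmt9_F A B 0 = 0 := by
  have h : (0 : RatFunc (ZMod 2)) = 0 ^ 2 + RatFunc.X * 0 ^ 2 := by ring
  rw [h, stmt9_F_eval]; ring

lemma stmt9_F_rel (A B : RatFunc (ZMod 2)) (x : RatFunc (ZMod 2)) (hx0 : x ≠ 0) :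
    stmt9_F A B x + x ^ 2 * stmt9_F A B x⁻¹ = 0 := by
  obtain ⟨⟨u, v⟩, hx⟩ := stmt9_decomp x
  dsimp only at hx
  have hinv : x⁻¹ = (u / x) ^ 2 + RatFunc.X * (v / x) ^ 2 := by
    conv_rhs => rw [div_pow, div_pow, ← mul_div_assoc, ← add_div, ← hx, pow_two,
      ← div_div, div_self hx0, one_div]
  have hFx : stmt9_F A B x = A * u ^ 2 + B * v ^ 2 := by
    conv_lhs => rw [hx, stmt9_F_eval]
  have hFinv : stmt9_F A B x⁻¹ = A * (u / x) ^ 2 + B * (v / x) ^ 2 := by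
    conv_lhs => rw [hinv, stmt9_F_eval]
  have hclear : x ^ 2 * (A * (u / x) ^ 2 + B * (v / x) ^ 2) = A * u ^ 2 + B * v ^ 2 := by
    field_simp
  rw [hFx, hFinv, hclear]
  exact CharTwo.add_self_eq_zero _

theorem stmt9 (A B : RatFunc (ZMod 2)) :
    ∃! fg : (RatFunc (ZMod 2) → RatFunc (ZMod 2)) × (RatFunc (ZMod 2) → RatFunc (ZMod 2)),
      (∀ x y : RatFunc (ZMod 2), fg.1 (x + y) = fg.1 x + fg.1 y) ∧
      (∀ x y : RatFunc (ZMod 2), fg.2 (x + y) = fg.2 x + fg.2 y) ∧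
      fg.1 1 = A ∧ fg.1 RatFunc.X = B ∧
      (∀ x : RatFunc (ZMod 2), x ≠ 0 → fg.1 x + x ^ 2 * fg.2 x⁻¹ = 0) := by
  refine ⟨(stmt9_F A B, stmt9_F A B),
    ⟨stmt9_F_add A B, stmt9_F_add A B, stmt9_F_one A B, stmt9_F_X A B, stmt9_F_rel A B⟩, ?_⟩
  rintro ⟨f, g⟩ ⟨hfadd, hgadd, hf1, hfX, hrel⟩
  have htwo : (2 : RatFunc (ZMod 2)) = 0 := stmt9_two
  dsimp only at hfadd hgadd hf1 hfX hrel
  have hf0 : f 0 = 0 := by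
    have h := hfadd 0 0
    rw [add_zero] at h
    exact (left_eq_add.mp h)
  have hg0 : g 0 = 0 := by
    have h := hgadd 0 0
    rw [add_zero] at h
    exact (left_eq_add.mp h)
  have hginv : ∀ x : RatFunc (ZMod 2), x ≠ 0 → g x = x ^ 2 * f x⁻¹ := by
    intro x hx
    have h := hrel x⁻¹ (inv_ne_zero hx)
    rw [inv_inv] at h
    have h2 := stmt9_add_eq h
    calc g x = x ^ 2 * (x⁻¹) ^ 2 * g x := by
          rw [← mul_pow, mul_inv_cancel₀ hx]; ring
      _ = x ^ 2 * f x⁻¹ := by rw [mul_assoc, ← h2]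
  have hstar : ∀ x y : RatFunc (ZMod 2), x ≠ 0 → y ≠ 0 → x + y ≠ 0 →
      (x + y) ^ 2 * f (x * y / (x + y)) = y ^ 2 * f x + x ^ 2 * f y := by
    intro x y hx hy hxy
    have hxy0 : x * y ≠ 0 := mul_ne_zero hx hy
    have hz : x⁻¹ + y⁻¹ = (x + y) / (x * y) := by field_simp; ring
    have hz0 : (x + y) / (x * y) ≠ 0 := div_ne_zero hxy hxy0
    have h := hgadd x⁻¹ y⁻¹
    rw [hz, hginv _ hz0, hginv _ (inv_ne_zero hx), hginv _ (inv_ne_zero hy),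
      inv_inv, inv_inv, inv_div] at h
    field_simp at h
    have goal2 : (x ^ 2 * y ^ 2) * ((x + y) ^ 2 * f (x * y / (x + y)))
        = (x ^ 2 * y ^ 2) * (y ^ 2 * f x + x ^ 2 * f y) := by linear_combination (x ^ 2 * y ^ 2) * h
    exact mul_left_cancel₀ (mul_ne_zero (pow_ne_zero 2 hx) (pow_ne_zero 2 hy)) goal2
  have hsemi : ∀ c : RatFunc (ZMod 2), c ≠ 0 → ∀ u : RatFunc (ZMod 2),
      f (c * u ^ 2) = u ^ 2 * f c := by
    intro c hc u
    by_cases hu0 : u = 0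
    · simp [hu0, hf0]
    by_cases hu1 : u = 1
    · simp [hu1]
    have hu1' : u + 1 ≠ 0 := fun h => hu1 (stmt9_add_eq h)
    have hx : c * u ≠ 0 := mul_ne_zero hc hu0
    have hy : c * (u + 1) ≠ 0 := mul_ne_zero hc hu1'
    have hsum : c * u + c * (u + 1) = c := by linear_combination (c * u) * htwo
    have h := hstar (c * u) (c * (u + 1)) hx hy (by rw [hsum]; exact hc)
    rw [hsum] at h
    have harg : c * u * (c * (u + 1)) / c = c * u ^ 2 + c * u := by
      field_simp
    rw [harg, hfadd] at h
    have hfy : f (c * (u + 1)) = f (c * u) + f c := by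
      rw [mul_add, hfadd, mul_one]
    rw [hfy] at h
    have key : c ^ 2 * f (c * u ^ 2) = c ^ 2 * (u ^ 2 * f c) := by
      linear_combination h + (c ^ 2 * u ^ 2 * f (c * u) + c ^ 2 * u * f (c * u)) * htwo
    exact mul_left_cancel₀ (pow_ne_zero 2 hc) key
  have hfe : f = stmt9_F A B := by
    funext x
    obtain ⟨⟨u, v⟩, hx⟩ := stmt9_decomp x
    dsimp only at hx
    have h1 : f (1 * u ^ 2) = u ^ 2 * f 1 := hsemi 1 one_ne_zero u
    have hXs : f (RatFunc.X * v ^ 2) = v ^ 2 * f RatFunc.X := hsemi RatFunc.X RatFunc.X_ne_zero v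
    rw [one_mul] at h1
    calc f x = f (u ^ 2 + RatFunc.X * v ^ 2) := by rw [← hx]
      _ = f (u ^ 2) + f (RatFunc.X * v ^ 2) := hfadd _ _
      _ = u ^ 2 * A + v ^ 2 * B := by rw [h1, hXs, hf1, hfX]
      _ = stmt9_F A B x := by rw [hx, stmt9_F_eval]; ring
  have hge : g = stmt9_F A B := by
    funext x
    by_cases hx0 : x = 0
    · rw [hx0, hg0, stmt9_F_zero]
    · rw [hginv x hx0, hfe]
      exact (stmt9_add_eq (stmt9_F_rel A B x hx0)).symm
  rw [hfe, hge]
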